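/- Let b_1, ..., b_n span a rank-n lattice, let L_k be the lattice spanned by b_1, ..., b_k, and let V_k be the k-dimensional volume of the parallelepiped spanned by b_1,...,b_k (V_k = sqrt(det Gram(b_1,...,b_k))). If every point of span_R L_k is within distance r_k of L_k, then every point of span_R L_{k+1} is within distance r_{k+1} of L_{k+1}, where r_{k+1}² ≤ r_k² + (V_{k+1}/(2V_k))². -/

import Mathlib

open Finset in
/-- Restrict a sum over `Fin n` to `Fin l` when the summand vanishes off the first `l` indices. -/
lemma sum_castLE_aux {l n : ℕ} (hl : l ≤ n) (F : Fin n → ℝ)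
    (hF : ∀ p : Fin n, ¬ (p.1 < l) → F p = 0) :
    ∑ p : Fin n, F p = ∑ p : Fin l, F (Fin.castLE hl p) := by
  have h2 : ∑ p : Fin l, F (Fin.castLE hl p) = ∑ p ∈ Finset.univ.map (Fin.castLEEmb hl), F p :=
    (Finset.sum_map Finset.univ (Fin.castLEEmb hl) F).symm
  rw [h2]
  refine (Finset.sum_subset (Finset.subset_univ _) ?_).symm
  intro x _ hx
  refine hF x fun hlt => hx ?_
  simp only [Finset.mem_map, Finset.mem_univ, true_and]
  exact ⟨⟨x.1, hlt⟩, by ext; simp⟩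

/-- Coefficients of a vector family w.r.t. its Gram–Schmidt orthogonalization. -/
noncomputable def gsCoeff {E : Type*} [NormedAddCommGroup E] [InnerProductSpace ℝ E]
    {n : ℕ} (f g : Fin n → E) (p i : Fin n) : ℝ :=
  if p = i then 1 else if p < i then inner ℝ (g p) (f i) / ‖g p‖ ^ 2 else 0

open Finset in
lemma gram_repr {E : Type*} [NormedAddCommGroup E] [InnerProductSpace ℝ E]
    {n : ℕ} (f g : Fin n → E)
    (hdef : ∀ i : Fin n, f i = g i + ∑ p ∈ Finset.Iio i,
      ((inner ℝ (g p) (f i) : ℝ) / ‖g p‖ ^ 2) • g p) (i : Fin n) :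
    f i = ∑ p : Fin n, gsCoeff f g p i • g p := by
  rw [hdef i, ← Finset.sum_subset (Finset.subset_univ (Finset.Iic i)) (fun p _ hp => by
    rw [Finset.mem_Iic, not_le] at hp
    simp only [gsCoeff]
    rw [if_neg hp.ne', if_neg hp.asymm, zero_smul])]
  rw [← Finset.Iio_insert, Finset.sum_insert (by simp)]
  congr 1
  · simp [gsCoeff]
  · refine Finset.sum_congr rfl fun p hp => ?_
    rw [Finset.mem_Iio] at hp
    simp only [gsCoeff]
    rw [if_neg hp.ne, if_pos hp]

open Finset Matrix in
lemma gram_det {E : Type*} [NormedAddCommGroup E] [InnerProductSpace ℝ E]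
    {l n : ℕ} (hl : l ≤ n) (f g : Fin n → E)
    (horth : ∀ p q : Fin n, p ≠ q → (inner ℝ (g p) (g q) : ℝ) = 0)
    (hrep : ∀ i : Fin n, f i = ∑ p : Fin n, gsCoeff f g p i • g p) :
    (Matrix.of fun i j : Fin l =>
      (inner ℝ (f (Fin.castLE hl i)) (f (Fin.castLE hl j)) : ℝ)).det
      = ∏ p : Fin l, ‖g (Fin.castLE hl p)‖ ^ 2 := by
  have key : ∀ i j : Fin n, (inner ℝ (f i) (f j) : ℝ) =
      ∑ p : Fin n, gsCoeff f g p i * gsCoeff f g p j * ‖g p‖ ^ 2 := by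
    intro i j
    conv_lhs => rw [hrep i, hrep j]
    rw [sum_inner]
    refine Finset.sum_congr rfl fun p _ => ?_
    rw [real_inner_smul_left, inner_sum, Finset.mul_sum]
    rw [Finset.sum_eq_single p (fun q _ hq => by
        rw [real_inner_smul_right, horth p q (Ne.symm hq)]; ring)
      (fun h => absurd (Finset.mem_univ p) h)]
    rw [real_inner_smul_right, real_inner_self_eq_norm_sq]
    ring
  set A : Matrix (Fin l) (Fin l) ℝ :=
    Matrix.of fun p i => gsCoeff f g (Fin.castLE hl p) (Fin.castLE hl i) with hA
  have hzero : ∀ (i : Fin l) (p : Fin n), ¬ p.1 < l → gsCoeff f g p (Fin.castLE hl i) = 0 := by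
    intro i p hp
    have h1 : (Fin.castLE hl i) < p := by
      rw [Fin.lt_def]; exact lt_of_lt_of_le i.2 (not_lt.1 hp)
    simp only [gsCoeff]
    rw [if_neg h1.ne', if_neg h1.asymm]
  have hM : (Matrix.of fun i j : Fin l =>
      (inner ℝ (f (Fin.castLE hl i)) (f (Fin.castLE hl j)) : ℝ))
      = Aᵀ * Matrix.diagonal (fun p : Fin l => ‖g (Fin.castLE hl p)‖ ^ 2) * A := by
    ext i j
    show (inner ℝ (f (Fin.castLE hl i)) (f (Fin.castLE hl j)) : ℝ) = _
    rw [key, sum_castLE_aux hl _ (fun p hp => by rw [hzero i p hp]; ring)]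
    rw [Matrix.mul_apply]
    refine Finset.sum_congr rfl fun p _ => ?_
    rw [Matrix.mul_diagonal, Matrix.transpose_apply]
    show gsCoeff f g (Fin.castLE hl p) (Fin.castLE hl i)
        * gsCoeff f g (Fin.castLE hl p) (Fin.castLE hl j)
        * ‖g (Fin.castLE hl p)‖ ^ 2
      = A p i * ‖g (Fin.castLE hl p)‖ ^ 2 * A p j
    show _ = gsCoeff f g (Fin.castLE hl p) (Fin.castLE hl i)
        * ‖g (Fin.castLE hl p)‖ ^ 2 * gsCoeff f g (Fin.castLE hl p) (Fin.castLE hl j)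
    ring
  have hAtri : A.BlockTriangular id := by
    intro i j hij
    show gsCoeff f g (Fin.castLE hl i) (Fin.castLE hl j) = 0
    have h1 : (Fin.castLE hl j) < Fin.castLE hl i := by
      rw [Fin.lt_def]; exact hij
    simp only [gsCoeff]
    rw [if_neg h1.ne', if_neg h1.asymm]
  have hdetA : A.det = 1 := by
    rw [Matrix.det_of_upperTriangular hAtri]
    refine Finset.prod_eq_one fun i _ => ?_
    show gsCoeff f g (Fin.castLE hl i) (Fin.castLE hl i) = 1
    simp [gsCoeff]
  rw [hM, Matrix.det_mul, Matrix.det_mul, Matrix.det_transpose, hdetA,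
    Matrix.det_diagonal, mul_one, one_mul]


/-- Let `b_1, ..., b_n` be linearly independent vectors in `ℝ^m`, let
`L_k` be the (ℤ-)lattice spanned by `b_1, ..., b_k` and `V_k = √(det Gram(b_1,...,b_k))`
the `k`-dimensional volume of the parallelepiped they span. If every point of
`span_ℝ L_k` is within distance `r` of `L_k`, then every point of `span_ℝ L_{k+1}` is
within distance `r'` of `L_{k+1}`, where `r'² ≤ r² + (V_{k+1}/(2 V_k))²`
(we take `r' = √(r² + (V_{k+1}/(2 V_k))²)`). -/
theorem covering_radius_inductive_step (m n : ℕ)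
    (b : Fin n → EuclideanSpace ℝ (Fin m)) (hb : LinearIndependent ℝ b)
    (k : ℕ) (hk : k + 1 ≤ n) (r : ℝ) (hr : 0 ≤ r)
    (V : ℕ → ℝ)
    (hV : ∀ l : ℕ, ∀ hl : l ≤ n, V l =
      Real.sqrt (Matrix.det (Matrix.of fun i j : Fin l =>
        (inner ℝ (b (Fin.castLE hl i)) (b (Fin.castLE hl j)) : ℝ))))
    (hcov : ∀ ξ ∈ Submodule.span ℝ
        (Set.range fun i : Fin k => b (Fin.castLE (by omega) i)),
      ∃ p ∈ Submodule.span ℤ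
        (Set.range fun i : Fin k => b (Fin.castLE (by omega) i)),
        dist ξ p ≤ r) :
    ∀ ξ ∈ Submodule.span ℝ
        (Set.range fun i : Fin (k + 1) => b (Fin.castLE hk i)),
      ∃ p ∈ Submodule.span ℤ
        (Set.range fun i : Fin (k + 1) => b (Fin.castLE hk i)),
        dist ξ p ≤ Real.sqrt (r ^ 2 + (V (k + 1) / (2 * V k)) ^ 2) := by
  haveI : NeZero n := ⟨by omega⟩
  haveI hwf : WellFoundedLT (Fin n) := inferInstance
  have hkn : k ≤ n := by omega
  intro ξ hξ
  set g : Fin n → EuclideanSpace ℝ (Fin m) := InnerProductSpace.gramSchmidt ℝ b with hgdef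
  set K : Fin n := ⟨k, by omega⟩ with hKdef
  -- basic facts about the Gram-Schmidt vectors
  have horth : ∀ p q : Fin n, p ≠ q → (inner ℝ (g p) (g q) : ℝ) = 0 :=
    fun p q h => InnerProductSpace.gramSchmidt_orthogonal ℝ b h
  have hrep : ∀ i : Fin n, b i = ∑ p : Fin n, gsCoeff b g p i • g p := by
    refine gram_repr b g fun i => ?_
    simpa using InnerProductSpace.gramSchmidt_def'' ℝ b i
  have hgne : ∀ p : Fin n, g p ≠ 0 := fun p => InnerProductSpace.gramSchmidt_ne_zero p hb
  -- the volumes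
  have hVl : ∀ l (hl : l ≤ n), V l = ∏ p : Fin l, ‖g (Fin.castLE hl p)‖ := by
    intro l hl
    rw [hV l hl, gram_det hl b g horth hrep, Finset.prod_pow]
    exact Real.sqrt_sq (Finset.prod_nonneg fun p _ => norm_nonneg _)
  have hVk_pos : 0 < V k := by
    rw [hVl k hkn]
    exact Finset.prod_pos fun p _ => norm_pos_iff.2 (hgne _)
  have hVsucc : V (k + 1) = V k * ‖g K‖ := by
    rw [hVl (k + 1) hk, hVl k hkn, Fin.prod_univ_castSucc]
    congr 1
  have hratio : V (k + 1) / (2 * V k) = ‖g K‖ / 2 := by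
    rw [hVsucc]
    field_simp
  -- spans
  set Sk : Set (EuclideanSpace ℝ (Fin m)) :=
    Set.range fun i : Fin k => b (Fin.castLE hkn i) with hSk
  set P : Submodule ℝ (EuclideanSpace ℝ (Fin m)) := Submodule.span ℝ Sk with hP
  have hset : (Set.range fun i : Fin (k + 1) => b (Fin.castLE hk i)) = insert (b K) Sk := by
    ext x
    constructor
    · rintro ⟨i, rfl⟩
      rcases lt_or_eq_of_le (Nat.lt_succ_iff.1 i.2) with h | h
      · exact Or.inr ⟨⟨i.1, h⟩, rfl⟩
      · left
        have h2 : Fin.castLE hk i = K := Fin.ext h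
        exact congrArg b h2
    · rintro (h | ⟨i, rfl⟩)
      · exact ⟨Fin.last k, h.symm⟩
      · exact ⟨⟨i.1, by omega⟩, rfl⟩
  have hSkIio : Sk = b '' Set.Iio K := by
    ext x
    constructor
    · rintro ⟨i, rfl⟩
      exact ⟨Fin.castLE hkn i, i.2, rfl⟩
    · rintro ⟨p, hp, rfl⟩
      exact ⟨⟨p.1, hp⟩, rfl⟩
  -- the projection of b K to P
  have hw : b K - g K ∈ P := by
    have h1 : b K - g K = ∑ p ∈ Finset.Iio K,
        ((ℝ ∙ g p).starProjection (b K) : EuclideanSpace ℝ (Fin m)) := by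
      rw [hgdef, InnerProductSpace.gramSchmidt_def ℝ b K]
      abel
    rw [h1]
    refine Submodule.sum_mem _ fun p hp => ?_
    rw [Finset.mem_Iio] at hp
    have h2 : (ℝ ∙ g p) ≤ P := by
      rw [Submodule.span_singleton_le_iff_mem, hP, hSkIio, ← InnerProductSpace.span_gramSchmidt_Iio ℝ b K]
      exact Submodule.subset_span ⟨p, hp, rfl⟩
    exact h2 (Submodule.starProjection_apply_mem _ _)
  have hperp : ∀ u ∈ P, (inner ℝ (g K) u : ℝ) = 0 := by
    intro u hu
    rw [hP, hSkIio, ← InnerProductSpace.span_gramSchmidt_Iio ℝ b K] at hu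
    induction hu using Submodule.span_induction with
    | mem x hx =>
      obtain ⟨p, hp, rfl⟩ := hx
      exact horth K p hp.ne'
    | zero => exact inner_zero_right _
    | add x y hx hy ihx ihy => rw [inner_add_right, ihx, ihy, add_zero]
    | smul a x hx ihx => rw [real_inner_smul_right, ihx, mul_zero]
  -- decompose ξ
  rw [hset] at hξ
  obtain ⟨t, η, hη, rfl⟩ := Submodule.mem_span_insert.1 hξ
  set q : ℤ := round t with hq
  set s : ℝ := t - q with hs
  have habs : |s| ≤ 1 / 2 := abs_sub_round t
  -- apply the covering hypothesis in P
  obtain ⟨p, hpZ, hpd⟩ := hcov (η + s • (b K - g K))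
    (Submodule.add_mem _ hη (Submodule.smul_mem _ _ hw))
  have hpP : p ∈ P := by
    have h3 : Submodule.span ℤ Sk ≤ Submodule.restrictScalars ℤ P :=
      Submodule.span_le.2 Submodule.subset_span
    exact h3 hpZ
  refine ⟨p + q • b K, ?_, ?_⟩
  · rw [hset]
    refine Submodule.add_mem _ (Submodule.span_mono (Set.subset_insert _ _) hpZ) ?_
    exact Submodule.smul_mem _ q (Submodule.subset_span (Set.mem_insert _ _))
  · set u : EuclideanSpace ℝ (Fin m) := η + s • (b K - g K) - p with hu
    have hx : t • b K + η - (p + q • b K) = u + s • g K := by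
      have h1 : ((q : ℝ)) • b K = q • b K := Int.cast_smul_eq_zsmul ℝ q (b K)
      rw [hu, ← h1, hs]
      simp only [smul_sub, sub_smul]
      abel
    have hinner : (inner ℝ u (s • g K) : ℝ) = 0 := by
      rw [real_inner_smul_right, real_inner_comm,
        hperp u (Submodule.sub_mem _ (Submodule.add_mem _ hη (Submodule.smul_mem _ _ hw)) hpP),
        mul_zero]
    have hnorm : ‖u + s • g K‖ ^ 2 = ‖u‖ ^ 2 + ‖s • g K‖ ^ 2 := by
      rw [norm_add_sq_real, hinner]
      ring
    have hu_le : ‖u‖ ≤ r := by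
      rw [hu, ← dist_eq_norm]
      exact hpd
    have hsg : ‖s • g K‖ ≤ ‖g K‖ / 2 := by
      rw [norm_smul, Real.norm_eq_abs]
      calc |s| * ‖g K‖ ≤ (1 / 2) * ‖g K‖ :=
            mul_le_mul_of_nonneg_right habs (norm_nonneg _)
        _ = ‖g K‖ / 2 := by ring
    rw [dist_eq_norm, hx, hratio, ← Real.sqrt_sq (norm_nonneg (u + s • g K))]
    refine Real.sqrt_le_sqrt ?_
    rw [hnorm]
    exact add_le_add (pow_le_pow_left₀ (norm_nonneg _) hu_le 2)
      (pow_le_pow_left₀ (norm_nonneg _) hsg 2)
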